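/- Let γ = ω^{ε_0} + … + ω^{ε_l} with ε_0 ≥ … ≥ ε_l, let γ_0 = 0 and γ_{i+1} = γ_i + ω^{ε_i}, let P be a tree with rank(P) = γ, k < ω, and f : P → {0,…,k}. Suppose Q is a subtree of P with rank(Q) = γ and F : {0,…,l} → {0,…,k} satisfy: Q^{γ_i} \ Q^{γ_{i+1}} = Q ∩ (P^{γ_i} \ P^{γ_{i+1}}) and f ≡ F(i) on Q^{γ_i} \ Q^{γ_{i+1}} for every i ≤ l. Then for every j ≤ k, writing A = {i ≤ l : F(i) = j} = {a(0) < … < a(p)} and α = ω^{ε_{a(0)}} + … + ω^{ε_{a(p)}} (with α = 0 if A = ∅), there exists a subtree R of P with rank(R) = α such that f(t) = j for all t ∈ R. -/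

import Mathlib

open Ordinal Set

universe u

/-- The set of maximal elements ("leaves") of `P`. -/
def treeLeaves {α : Type u} [PartialOrder α] (P : Set α) : Set α :=
  {t ∈ P | ∀ s ∈ P, ¬ t < s}

/-- The derivative `P' = P \ Leaves P`. -/
def treeDeriv {α : Type u} [PartialOrder α] (P : Set α) : Set α :=
  P \ treeLeaves P

/-- The transfinite iterated derivative `P^ξ`. -/
noncomputable def derivIter {α : Type u} [PartialOrder α] (P : Set α) (ξ : Ordinal.{u}) :
    Set α :=
  Ordinal.limitRecOn ξ P (fun _ ih => treeDeriv ih)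
    (fun o _ ih => ⋂ (ζ : Set.Iio o), ih ζ.1 ζ.2)

/-- `P` is a tree: every ancestor set is well-ordered (a well-founded chain). -/
def IsTree {α : Type u} [PartialOrder α] (P : Set α) : Prop :=
  ∀ t ∈ P, IsChain (· ≤ ·) {s ∈ P | s ≤ t} ∧ {s ∈ P | s ≤ t}.WellFoundedOn (· < ·)

/-- `P` is well-founded: some transfinite derivative is empty. -/
def IsWFTree {α : Type u} [PartialOrder α] (P : Set α) : Prop :=
  ∃ ξ : Ordinal.{u}, derivIter P ξ = ∅

/-- The rank of a well-founded tree: the least `ξ` with `P^ξ = ∅`. -/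
noncomputable def treeRank {α : Type u} [PartialOrder α] (P : Set α) : Ordinal.{u} :=
  sInf {ξ | derivIter P ξ = ∅}

/-- `τ_P(t)`: the largest ordinal `ξ` with `t ∈ P^ξ`. -/
noncomputable def treeTau {α : Type u} [PartialOrder α] (P : Set α) (t : α) : Ordinal.{u} :=
  sSup {ξ | t ∈ derivIter P ξ}

/-- `τ_{P,β}(t)`: the largest ordinal `ξ` with `t ∈ P^{β·ξ}`. -/
noncomputable def treeTauMul {α : Type u} [PartialOrder α] (P : Set α) (β : Ordinal.{u})
    (t : α) : Ordinal.{u} :=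
  sSup {ξ | t ∈ derivIter P (β * ξ)}

/-- `alpProd ε i = ω^{ω^{ε 0}} · ⋯ · ω^{ω^{ε i}}`. -/
noncomputable def alpProd (ε : ℕ → Ordinal.{u}) : ℕ → Ordinal.{u}
  | 0 => omega0 ^ omega0 ^ ε 0
  | (i + 1) => alpProd ε i * omega0 ^ omega0 ^ ε (i + 1)

/-- The separation function `ς_P` of a tree whose rank has decomposition
`ω^{ω^{ε 0}} ⋯ ω^{ω^{ε l}}`: the least `i` such that `s, t` lie in the same block
`P^{α_i·δ} \ P^{α_i·(δ+1)}` for some ordinal `δ`. -/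
noncomputable def sep {α : Type u} [PartialOrder α] (P : Set α) (ε : ℕ → Ordinal.{u})
    (s t : α) : ℕ :=
  sInf {i : ℕ | ∃ δ : Ordinal.{u},
    s ∈ derivIter P (alpProd ε i * δ) \ derivIter P (alpProd ε i * (δ + 1)) ∧
    t ∈ derivIter P (alpProd ε i * δ) \ derivIter P (alpProd ε i * (δ + 1))}

/-- `indProd ε A l = ω^{ω^{ε 0}·1_A(0)} ⋯ ω^{ω^{ε l}·1_A(l)}`. -/
noncomputable def indProd (ε : ℕ → Ordinal.{u}) (A : Set ℕ) : ℕ → Ordinal.{u}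
  | 0 => omega0 ^ (omega0 ^ ε 0 * A.indicator (fun _ => (1 : Ordinal.{u})) 0)
  | (i + 1) => indProd ε A i *
      omega0 ^ (omega0 ^ ε (i + 1) * A.indicator (fun _ => (1 : Ordinal.{u})) (i + 1))

/-- `sumPow ε i = ω^{ε 0} + ⋯ + ω^{ε (i-1)}` (the partial sums `γ_i`). -/
noncomputable def sumPow (ε : ℕ → Ordinal.{u}) : ℕ → Ordinal.{u}
  | 0 => 0
  | (i + 1) => sumPow ε i + omega0 ^ ε i

/-- `indSum ε A i = Σ_{n < i} 1_A(n)·ω^{ε n}`. -/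
noncomputable def indSum (ε : ℕ → Ordinal.{u}) (A : Set ℕ) : ℕ → Ordinal.{u}
  | 0 => 0
  | (i + 1) => indSum ε A i + A.indicator (fun _ => (1 : Ordinal.{u})) i * omega0 ^ ε i


section helpers
variable {α : Type u} [PartialOrder α] {P Q : Set α}

lemma derivIter_zero (P : Set α) : derivIter P 0 = P :=
  Ordinal.limitRecOn_zero _ _ _

lemma derivIter_succ (P : Set α) (ξ : Ordinal.{u}) :
    derivIter P (ξ + 1) = treeDeriv (derivIter P ξ) := by
  rw [derivIter, Ordinal.add_one_eq_succ, Ordinal.limitRecOn_succ]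
  rfl

lemma derivIter_limit (P : Set α) {ξ : Ordinal.{u}} (h : Order.IsSuccLimit ξ) :
    derivIter P ξ = ⋂ (ζ : Set.Iio ξ), derivIter P ζ.1 := by
  rw [derivIter, Ordinal.limitRecOn_limit _ _ _ _ h]
  rfl

lemma mem_derivIter_limit (P : Set α) {ξ : Ordinal.{u}} (h : Order.IsSuccLimit ξ) {x : α} :
    x ∈ derivIter P ξ ↔ ∀ ζ < ξ, x ∈ derivIter P ζ := by
  rw [derivIter_limit P h]
  constructor
  · intro hx ζ hζ; exact Set.mem_iInter.1 hx ⟨ζ, hζ⟩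
  · intro hx; exact Set.mem_iInter.2 fun ζ => hx ζ.1 ζ.2

lemma treeDeriv_subset (P : Set α) : treeDeriv P ⊆ P := Set.diff_subset

lemma mem_treeDeriv {x : α} : x ∈ treeDeriv P ↔ x ∈ P ∧ ∃ s ∈ P, x < s := by
  simp only [treeDeriv, treeLeaves, Set.mem_diff, Set.mem_setOf_eq, not_and, not_forall,
    not_not, and_congr_right_iff]
  tauto

lemma treeDeriv_mono (h : P ⊆ Q) : treeDeriv P ⊆ treeDeriv Q := by
  intro x hx
  rw [mem_treeDeriv] at hx ⊢
  obtain ⟨hxP, s, hs, hxs⟩ := hx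
  exact ⟨h hxP, s, h hs, hxs⟩

lemma derivIter_mono (h : P ⊆ Q) (ξ : Ordinal.{u}) : derivIter P ξ ⊆ derivIter Q ξ := by
  induction ξ using Ordinal.limitRecOn with
  | zero => rwa [derivIter_zero, derivIter_zero]
  | add_one ξ ih =>
    rw [derivIter_succ, derivIter_succ]
    exact treeDeriv_mono ih
  | limit ξ hξ ih =>
    rw [derivIter_limit P hξ, derivIter_limit Q hξ]
    exact Set.iInter_mono fun ζ => ih ζ.1 ζ.2

lemma derivIter_subset (P : Set α) (ξ : Ordinal.{u}) : derivIter P ξ ⊆ P := by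
  induction ξ using Ordinal.limitRecOn with
  | zero => rw [derivIter_zero]
  | add_one ξ ih =>
    rw [derivIter_succ]
    exact (treeDeriv_subset _).trans ih
  | limit ξ hξ ih =>
    intro x hx
    have := (mem_derivIter_limit P hξ).1 hx 0 hξ.pos
    rwa [derivIter_zero] at this

lemma derivIter_anti (P : Set α) {ζ ξ : Ordinal.{u}} (h : ζ ≤ ξ) :
    derivIter P ξ ⊆ derivIter P ζ := by
  induction ξ using Ordinal.limitRecOn with
  | zero => rw [nonpos_iff_eq_zero.1 h]
  | add_one ξ ih =>
    rcases Order.le_succ_iff_eq_or_le.1 h with h | h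
    · rw [h, Ordinal.add_one_eq_succ]
    · rw [derivIter_succ]
      exact (treeDeriv_subset _).trans (ih h)
  | limit ξ hξ ih =>
    rcases h.lt_or_eq with h | h
    · intro x hx
      exact ih ζ h le_rfl ((mem_derivIter_limit P hξ).1 hx ζ h)
    · rw [h]

lemma derivIter_add (P : Set α) (β ξ : Ordinal.{u}) :
    derivIter P (β + ξ) = derivIter (derivIter P β) ξ := by
  induction ξ using Ordinal.limitRecOn with
  | zero => rw [add_zero, derivIter_zero]
  | add_one ξ ih =>
    rw [← add_assoc, derivIter_succ, derivIter_succ, ih]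
  | limit ξ hξ ih =>
    have hβξ : Order.IsSuccLimit (β + ξ) := Ordinal.isSuccLimit_add β hξ
    ext x
    rw [mem_derivIter_limit P hβξ, mem_derivIter_limit _ hξ]
    constructor
    · intro hx ζ hζ
      rw [← ih ζ hζ]
      exact hx (β + ζ) ((add_lt_add_iff_left β).2 hζ)
    · intro hx ζ hζ
      rcases le_or_gt ζ β with h | h
      · have := hx 0 hξ.pos
        rw [derivIter_zero] at this
        exact derivIter_anti P h this
      · have hle : β ≤ ζ := h.le
        have hζ' : ζ - β < ξ := by
          rwa [Ordinal.sub_lt_of_le hle]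
        have := hx (ζ - β) hζ'
        rw [← ih _ hζ'] at this
        rwa [Ordinal.add_sub_cancel_of_le hle] at this

lemma derivIter_eq_of_fixed {β : Ordinal.{u}} (h : derivIter P (β + 1) = derivIter P β)
    {ξ : Ordinal.{u}} (hβξ : β ≤ ξ) : derivIter P ξ = derivIter P β := by
  induction ξ using Ordinal.limitRecOn with
  | zero => rw [nonpos_iff_eq_zero.1 hβξ]
  | add_one ξ ih =>
    rcases Order.le_succ_iff_eq_or_le.1 hβξ with h' | h'
    · rw [h', Ordinal.add_one_eq_succ]
    · rw [derivIter_succ, ih h', ← derivIter_succ, h]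
  | limit ξ hξ ih =>
    rcases hβξ.lt_or_eq with h' | h'
    · apply subset_antisymm
      · intro x hx
        exact (mem_derivIter_limit P hξ).1 hx β h'
      · intro x hx
        rw [mem_derivIter_limit P hξ]
        intro ζ hζ
        rcases le_or_gt ζ β with hc | hc
        · exact derivIter_anti P hc hx
        · rw [ih ζ hζ hc.le]; exact hx
    · rw [← h']

noncomputable def treeTau' {α : Type u} [PartialOrder α] (P : Set α) (t : α) : Ordinal.{u} :=
  sSup {ξ | t ∈ derivIter P ξ}

lemma mem_derivIter_of_lt {u v : α} (hu : u ∈ Q) (huv : u < v) {ζ : Ordinal.{u}}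
    (hv : v ∈ derivIter Q ζ) : u ∈ derivIter Q ζ := by
  induction ζ using Ordinal.limitRecOn with
  | zero => rwa [derivIter_zero]
  | add_one ζ ih =>
    rw [derivIter_succ, mem_treeDeriv] at hv ⊢
    exact ⟨ih hv.1, v, hv.1, huv⟩
  | limit ζ hζ ih =>
    rw [mem_derivIter_limit Q hζ] at hv ⊢
    exact fun η hη => ih η hη (hv η hη)

lemma mem_derivIter_succ_of_lt {u v : α} (hu : u ∈ Q) (huv : u < v) {ζ : Ordinal.{u}}
    (hv : v ∈ derivIter Q ζ) : u ∈ derivIter Q (ζ + 1) := by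
  rw [derivIter_succ, mem_treeDeriv]
  exact ⟨mem_derivIter_of_lt hu huv hv, v, hv, huv⟩

section tau
variable {ρ : Ordinal.{u}} (hW : derivIter Q ρ = ∅)
include hW

lemma tau_bddAbove (x : α) : BddAbove {ξ : Ordinal.{u} | x ∈ derivIter Q ξ} := by
  refine ⟨ρ, fun ξ hξ => ?_⟩
  by_contra h
  push_neg at h
  have := derivIter_anti Q h.le hξ
  rw [hW] at this
  exact this

lemma le_treeTau {x : α} {ξ : Ordinal.{u}} (hx : x ∈ derivIter Q ξ) : ξ ≤ treeTau' Q x :=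
  le_csSup (tau_bddAbove hW x) hx

lemma mem_derivIter_treeTau {x : α} (hx : x ∈ Q) : x ∈ derivIter Q (treeTau' Q x) := by
  have hne : {ξ : Ordinal.{u} | x ∈ derivIter Q ξ}.Nonempty :=
    ⟨0, by rwa [Set.mem_setOf_eq, derivIter_zero]⟩
  rcases Ordinal.zero_or_succ_or_isSuccLimit (treeTau' Q x) with h | ⟨ζ, h⟩ | h
  · rw [h, derivIter_zero]; exact hx
  · have : ζ < treeTau' Q x := by rw [← h]; exact Order.lt_succ ζ
    obtain ⟨s, hs, hζs⟩ := exists_lt_of_lt_csSup hne this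
    have hs' : s ≤ treeTau' Q x := le_csSup (tau_bddAbove hW x) hs
    have : s = treeTau' Q x := le_antisymm hs' (by rw [← h]; exact Order.succ_le_of_lt hζs)
    rwa [← this]
  · rw [mem_derivIter_limit Q h]
    intro ζ hζ
    obtain ⟨s, hs, hζs⟩ := exists_lt_of_lt_csSup hne hζ
    exact derivIter_anti Q hζs.le hs

lemma not_mem_treeTau_succ (x : α) : x ∉ derivIter Q (treeTau' Q x + 1) := by
  intro h
  have := le_treeTau hW h
  exact (Order.succ_le_iff.1 (Ordinal.add_one_eq_succ (treeTau' Q x) ▸ this)).false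

/-- Lemma A: exact-level successor. -/
lemma exists_exact_level {t : α} {ξ : Ordinal.{u}} (ht : t ∈ derivIter Q (ξ + 1)) :
    ∃ u, t < u ∧ u ∈ derivIter Q ξ ∧ u ∉ derivIter Q (ξ + 1) := by
  have ht' : t ∈ derivIter Q ξ ∧ ∃ s ∈ derivIter Q ξ, t < s := by
    rw [← mem_treeDeriv, ← derivIter_succ]; exact ht
  set O : Set Ordinal.{u} := treeTau' Q '' {u | u ∈ derivIter Q ξ ∧ t < u} with hO
  have hOne : O.Nonempty := by
    obtain ⟨s, hs, hts⟩ := ht'.2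
    exact ⟨treeTau' Q s, ⟨s, ⟨hs, hts⟩, rfl⟩⟩
  obtain ⟨u, ⟨huξ, htu⟩, huτ⟩ := csInf_mem hOne
  refine ⟨u, htu, huξ, fun hu1 => ?_⟩
  -- u ∈ Q^{ξ+1} gives some v > u in Q^ξ with smaller tau
  rw [derivIter_succ, mem_treeDeriv] at hu1
  obtain ⟨-, v, hvξ, huv⟩ := hu1
  have hvO : treeTau' Q v ∈ O := ⟨v, ⟨hvξ, htu.trans huv⟩, rfl⟩
  have hlt : treeTau' Q v < treeTau' Q u := by
    have : u ∈ derivIter Q (treeTau' Q v + 1) :=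
      mem_derivIter_succ_of_lt (derivIter_subset Q ξ huξ) huv
        (mem_derivIter_treeTau hW (derivIter_subset Q _ hvξ))
    have h2 := le_treeTau hW this
    have h3 : treeTau' Q v < treeTau' Q v + 1 := by
      rw [Ordinal.add_one_eq_succ]; exact Order.lt_succ _
    exact h3.trans_le h2
  rw [huτ] at hlt
  exact absurd (csInf_le (OrderBot.bddBelow O) hvO) (not_le.2 hlt)

end tau

end helpers

lemma sumPow_mono (ε : ℕ → Ordinal.{u}) {i j : ℕ} (h : i ≤ j) : sumPow ε i ≤ sumPow ε j := by
  induction h with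
  | refl => exact le_rfl
  | step h ih => exact ih.trans (le_self_add)


/-- with `Q ⊆ P` of full rank whose levels are cut out from the
levels of `P` and on whose `i`-th level `f ≡ F(i)`, for every color `j` there is a
subtree `R` of `P` of rank `Σ_{i ∈ A} ω^{ε_i}` (where `A = {i ≤ l : F(i) = j}`,
with rank `0` when `A = ∅`) on which `f` is identically `j`. -/
theorem statement6 {α : Type u} [PartialOrder α] (l k : ℕ) (ε : ℕ → Ordinal.{u})
    (hε : ∀ i < l, ε (i + 1) ≤ ε i) (P : Set α) (hP : IsTree P) (hWF : IsWFTree P)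
    (hrank : treeRank P = sumPow ε (l + 1)) (f : α → Fin (k + 1))
    (Q : Set α) (hQP : Q ⊆ P) (hQrank : treeRank Q = sumPow ε (l + 1))
    (F : Fin (l + 1) → Fin (k + 1))
    (hlevel : ∀ (i : ℕ) (hi : i ≤ l),
      (derivIter Q (sumPow ε i) \ derivIter Q (sumPow ε (i + 1)) =
        Q ∩ (derivIter P (sumPow ε i) \ derivIter P (sumPow ε (i + 1)))) ∧
      (∀ t ∈ derivIter Q (sumPow ε i) \ derivIter Q (sumPow ε (i + 1)),
        f t = F ⟨i, Nat.lt_succ_of_le hi⟩))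
    (j : Fin (k + 1)) :
    ∃ R ⊆ P, treeRank R = indSum ε {i : ℕ | ∃ h : i < l + 1, F ⟨i, h⟩ = j} (l + 1) ∧
      ∀ t ∈ R, f t = j := by
  classical
  set A : Set ℕ := {i : ℕ | ∃ h : i < l + 1, F ⟨i, h⟩ = j} with hA
  set R : Set α :=
    ⋃ i ∈ A, (derivIter Q (sumPow ε i) \ derivIter Q (sumPow ε (i + 1))) with hRdef
  have hRQ : R ⊆ Q :=
    Set.iUnion₂_subset fun i _ => Set.diff_subset.trans (derivIter_subset Q _)
  have hmemR : ∀ {t : α}, t ∈ R ↔ ∃ i ∈ A,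
      t ∈ derivIter Q (sumPow ε i) \ derivIter Q (sumPow ε (i + 1)) := by
    intro t
    rw [hRdef]
    simp only [Set.mem_iUnion, exists_prop]
  -- positivity of the full rank
  have hpos : (0 : Ordinal.{u}) < sumPow ε (l + 1) := by
    have h1 : (0 : Ordinal.{u}) < omega0 ^ ε l := Ordinal.opow_pos _ omega0_pos
    calc (0 : Ordinal.{u}) < omega0 ^ ε l := h1
      _ ≤ sumPow ε l + omega0 ^ ε l := le_add_self
      _ = sumPow ε (l + 1) := rfl
  -- Q is well-founded
  have hQWFset : {ξ : Ordinal.{u} | derivIter Q ξ = ∅}.Nonempty := by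
    by_contra h
    rw [Set.not_nonempty_iff_eq_empty] at h
    have : treeRank Q = 0 := by
      rw [treeRank, h, Ordinal.sInf_empty]
    rw [hQrank] at this
    exact absurd this (ne_of_gt hpos)
  have hQempty : derivIter Q (sumPow ε (l + 1)) = ∅ := by
    have h1 : derivIter Q (treeRank Q) = ∅ := csInf_mem hQWFset
    rwa [hQrank] at h1
  have hQne : ∀ ξ < sumPow ε (l + 1), (derivIter Q ξ).Nonempty := by
    intro ξ hξ
    rw [Set.nonempty_iff_ne_empty]
    intro h
    have h2 : treeRank Q ≤ ξ := csInf_le' h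
    rw [hQrank] at h2
    exact absurd hξ (not_lt.2 h2)
  have hblock : ∀ β < sumPow ε (l + 1), (derivIter Q β \ derivIter Q (β + 1)).Nonempty := by
    intro β hβ
    rw [Set.nonempty_iff_ne_empty]
    intro h
    have hsub : derivIter Q β ⊆ derivIter Q (β + 1) := by rwa [Set.diff_eq_empty] at h
    have heq : derivIter Q (β + 1) = derivIter Q β :=
      subset_antisymm (derivIter_anti Q (le_self_add)) hsub
    have h3 := derivIter_eq_of_fixed heq hβ.le
    rw [hQempty] at h3
    exact absurd h3.symm (Set.nonempty_iff_ne_empty.1 (hQne β hβ))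
  -- upper bound
  have claimU : ∀ i, derivIter R (indSum ε A i) ⊆ derivIter Q (sumPow ε i) := by
    intro i
    induction i with
    | zero =>
      rw [show indSum ε A 0 = 0 from rfl, show sumPow ε 0 = 0 from rfl,
        derivIter_zero, derivIter_zero]
      exact hRQ
    | succ i ihi =>
      by_cases hiA : i ∈ A
      · have hind : indSum ε A (i + 1) = indSum ε A i + omega0 ^ ε i := by
          show indSum ε A i + A.indicator _ i * _ = _
          rw [Set.indicator_of_mem hiA, one_mul]
        rw [hind, derivIter_add,
          show sumPow ε (i + 1) = sumPow ε i + omega0 ^ ε i from rfl, derivIter_add]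
        exact derivIter_mono ihi _
      · have hind : indSum ε A (i + 1) = indSum ε A i := by
          show indSum ε A i + A.indicator _ i * _ = _
          rw [Set.indicator_of_notMem hiA, zero_mul, add_zero]
        rw [hind]
        intro t ht
        have htR : t ∈ R := derivIter_subset R _ ht
        have htQ : t ∈ derivIter Q (sumPow ε i) := ihi ht
        by_contra htn
        obtain ⟨n, hnA, htn'⟩ := hmemR.1 htR
        rcases lt_trichotomy n i with h | h | h
        · exact htn'.2 (derivIter_anti Q (sumPow_mono ε (Nat.succ_le_of_lt h)) htQ)
        · exact hiA (h ▸ hnA)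
        · exact htn (derivIter_anti Q (sumPow_mono ε (Nat.succ_le_of_lt h)) htn'.1)
  have hupper : derivIter R (indSum ε A (l + 1)) = ∅ :=
    Set.subset_empty_iff.1 (hQempty ▸ claimU (l + 1))
  -- inner lemma (levels in A)
  have inner : ∀ i, i ∈ A →
      (R ∩ derivIter Q (sumPow ε i) ⊆ derivIter R (indSum ε A i)) →
      ∀ ζ, ζ ≤ omega0 ^ ε i →
        R ∩ derivIter Q (sumPow ε i + ζ) ⊆ derivIter R (indSum ε A i + ζ) := by
    intro i hiA hbase ζ
    induction ζ using Ordinal.limitRecOn with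
    | zero => intro _; rw [add_zero, add_zero]; exact hbase
    | add_one ζ ihζ =>
      intro hζ1
      have hζ : ζ ≤ omega0 ^ ε i := by
        refine le_of_lt (lt_of_lt_of_le ?_ hζ1)
        rw [Ordinal.add_one_eq_succ]; exact Order.lt_succ ζ
      have ihζ' := ihζ hζ
      rintro t ⟨htR, htQ⟩
      rw [← add_assoc] at htQ
      obtain ⟨u, htu, huQ, hun⟩ := exists_exact_level hQempty htQ
      have huγi : u ∈ derivIter Q (sumPow ε i) :=
        derivIter_anti Q (le_self_add) huQ
      have hun' : u ∉ derivIter Q (sumPow ε (i + 1)) := by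
        intro hc
        apply hun
        have hle : sumPow ε i + ζ + 1 ≤ sumPow ε (i + 1) := by
          rw [add_assoc]
          exact add_le_add le_rfl hζ1
        exact derivIter_anti Q hle hc
      have huR : u ∈ R := hmemR.2 ⟨i, hiA, huγi, hun'⟩
      have huS : u ∈ derivIter R (indSum ε A i + ζ) := ihζ' ⟨huR, huQ⟩
      have htS : t ∈ derivIter R (indSum ε A i + ζ) :=
        ihζ' ⟨htR, derivIter_anti Q (le_self_add) htQ⟩
      rw [← add_assoc, derivIter_succ, mem_treeDeriv]
      exact ⟨htS, u, huS, htu⟩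
    | limit ζ hζlim ihζ =>
      intro hζ
      rintro t ⟨htR, htQ⟩
      have hlim2 : Order.IsSuccLimit (indSum ε A i + ζ) := Ordinal.isSuccLimit_add _ hζlim
      rw [mem_derivIter_limit R hlim2]
      intro η hη
      rcases le_or_gt η (indSum ε A i) with hc | hc
      · exact derivIter_anti R hc
          (hbase ⟨htR, derivIter_anti Q (le_self_add) htQ⟩)
      · have h1 : η - indSum ε A i < ζ := by rwa [Ordinal.sub_lt_of_le hc.le]
        have h2 : η = indSum ε A i + (η - indSum ε A i) :=
          (Ordinal.add_sub_cancel_of_le hc.le).symm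
        rw [h2]
        exact ihζ _ h1 (le_of_lt (h1.trans_le hζ))
          ⟨htR, derivIter_anti Q (add_le_add le_rfl h1.le) htQ⟩
  -- lower bound (full levels)
  have claimL : ∀ i, R ∩ derivIter Q (sumPow ε i) ⊆ derivIter R (indSum ε A i) := by
    intro i
    induction i with
    | zero =>
      rw [show indSum ε A 0 = 0 from rfl, show sumPow ε 0 = 0 from rfl, derivIter_zero Q, derivIter_zero R]
      exact Set.inter_subset_left
    | succ i ihi =>
      by_cases hiA : i ∈ A
      · have hind : indSum ε A (i + 1) = indSum ε A i + omega0 ^ ε i := by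
          show indSum ε A i + A.indicator _ i * _ = _
          rw [Set.indicator_of_mem hiA, one_mul]
        rw [hind, show sumPow ε (i + 1) = sumPow ε i + omega0 ^ ε i from rfl]
        exact inner i hiA ihi (omega0 ^ ε i) le_rfl
      · have hind : indSum ε A (i + 1) = indSum ε A i := by
          show indSum ε A i + A.indicator _ i * _ = _
          rw [Set.indicator_of_notMem hiA, zero_mul, add_zero]
        rw [hind]
        rintro t ⟨htR, htQ⟩
        exact ihi ⟨htR, derivIter_anti Q (le_self_add) htQ⟩
  -- nonemptiness below the rank
  have hlow : ∀ ξ < indSum ε A (l + 1), (derivIter R ξ).Nonempty := by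
    intro ξ hξ
    have hex : ∃ n, ξ < indSum ε A (n + 1) := ⟨l, hξ⟩
    set n₀ := Nat.find hex with hn₀
    have hp : ξ < indSum ε A (n₀ + 1) := Nat.find_spec hex
    have hσle : indSum ε A n₀ ≤ ξ := by
      rcases Nat.eq_zero_or_eq_succ_pred n₀ with h | h
      · rw [h]; exact zero_le
      · have := Nat.find_min hex (m := n₀ - 1) (by omega)
        push_neg at this
        have h2 : n₀ - 1 + 1 = n₀ := by omega
        rwa [h2] at this
    have hn₀A : n₀ ∈ A := by
      by_contra hc
      have hind : indSum ε A (n₀ + 1) = indSum ε A n₀ := by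
        show indSum ε A n₀ + A.indicator _ n₀ * _ = _
        rw [Set.indicator_of_notMem hc, zero_mul, add_zero]
      rw [hind] at hp
      exact absurd hσle (not_le.2 hp)
    have hn₀l : n₀ < l + 1 := hn₀A.1
    have hind : indSum ε A (n₀ + 1) = indSum ε A n₀ + omega0 ^ ε n₀ := by
      show indSum ε A n₀ + A.indicator _ n₀ * _ = _
      rw [Set.indicator_of_mem hn₀A, one_mul]
    set ζ := ξ - indSum ε A n₀ with hζdef
    have hζeq : indSum ε A n₀ + ζ = ξ := Ordinal.add_sub_cancel_of_le hσle
    have hζω : ζ < omega0 ^ ε n₀ := by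
      rw [hind, ← hζeq] at hp
      exact (add_lt_add_iff_left _).1 hp
    have hβ : sumPow ε n₀ + ζ < sumPow ε (l + 1) := by
      calc sumPow ε n₀ + ζ < sumPow ε n₀ + omega0 ^ ε n₀ := (add_lt_add_iff_left _).2 hζω
        _ = sumPow ε (n₀ + 1) := rfl
        _ ≤ sumPow ε (l + 1) := sumPow_mono ε hn₀l
    obtain ⟨t, htQ, htn⟩ := hblock _ hβ
    have hζ1 : ζ + 1 ≤ omega0 ^ ε n₀ := by
      rw [Ordinal.add_one_eq_succ]; exact Order.succ_le_of_lt hζω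
    have htR : t ∈ R := by
      refine hmemR.2 ⟨n₀, hn₀A, derivIter_anti Q (le_self_add) htQ, fun hc => ?_⟩
      apply htn
      have hle : sumPow ε n₀ + ζ + 1 ≤ sumPow ε (n₀ + 1) := by
        rw [add_assoc]; exact add_le_add le_rfl hζ1
      exact derivIter_anti Q hle hc
    have := inner n₀ hn₀A (claimL n₀) ζ hζω.le ⟨htR, htQ⟩
    rw [hζeq] at this
    exact ⟨t, this⟩
  -- rank computation
  have hrankR : treeRank R = indSum ε A (l + 1) := by
    apply le_antisymm
    · exact csInf_le' hupper
    · show indSum ε A (l + 1) ≤ sInf {ξ : Ordinal.{u} | derivIter R ξ = ∅}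
      refine le_csInf ⟨_, hupper⟩ fun b hb => ?_
      by_contra hc
      push_neg at hc
      obtain ⟨t, ht⟩ := hlow b hc
      rw [Set.mem_setOf_eq] at hb
      rw [hb] at ht
      exact ht
  refine ⟨R, hRQ.trans hQP, hrankR, ?_⟩
  intro t ht
  obtain ⟨i, hiA, hti⟩ := hmemR.1 ht
  obtain ⟨hil1, hFi⟩ := hiA
  have := (hlevel i (Nat.lt_succ_iff.1 hil1)).2 t hti
  rw [this]
  exact hFi
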